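/- Fix an integer n ≥ 2. For a positive integer M, let I(M) be the integral over x from 0 to 1 of [ x^{-2}(1 - (1-x)^M) - x^{-1} M (1-x)^{M-1} ] · n x (1-x)^{n-1} dx. Then I(M)/log M converges to n as M → ∞. -/

import Mathlib

open Filter Finset

lemma harmonic_real (m : ℕ) : ((harmonic m : ℚ) : ℝ) = ∑ i ∈ range m, ((i : ℝ) + 1)⁻¹ := by
  rw [harmonic]
  push_cast
  rfl

lemma int_one_sub_pow (j : ℕ) : (∫ x in (0:ℝ)..1, (1 - x)^j) = 1 / ((j:ℝ) + 1) := by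
  have h := intervalIntegral.integral_comp_sub_left (fun x : ℝ => x ^ j) 1 (a := 0) (b := 1)
  rw [h]
  norm_num [integral_pow]

lemma pointwise_eq (n M : ℕ) (x : ℝ) (hx : x ≠ 0) :
    (x⁻¹ ^ 2 * (1 - (1 - x) ^ M) - x⁻¹ * M * (1 - x) ^ (M - 1)) * (n * x * (1 - x) ^ (n - 1))
      = (∑ k ∈ range M, (n : ℝ) * (1 - x) ^ (n - 1 + k))
        - (n : ℝ) * M * (1 - x) ^ (M - 1 + (n - 1)) := by
  have hS : x * (∑ k ∈ range M, (1 - x) ^ k) = 1 - (1 - x) ^ M := by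
    have := geom_sum_mul (1 - x) M
    nlinarith [this]
  have hsum : (∑ k ∈ range M, (n : ℝ) * (1 - x) ^ (n - 1 + k))
      = (n : ℝ) * (1 - x) ^ (n - 1) * (∑ k ∈ range M, (1 - x) ^ k) := by
    rw [Finset.mul_sum]
    exact Finset.sum_congr rfl fun k _ => by rw [pow_add]; ring
  rw [hsum, ← hS, pow_add]
  field_simp

lemma integral_eq (n M : ℕ) (hn : 1 ≤ n) (hM : 1 ≤ M) :
    (∫ x in (0:ℝ)..1,
        (x⁻¹ ^ 2 * (1 - (1 - x) ^ M) - x⁻¹ * M * (1 - x) ^ (M - 1)) *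
          (n * x * (1 - x) ^ (n - 1)))
      = (∑ k ∈ range M, (n : ℝ) / ((n : ℝ) + k)) - (n : ℝ) * M / ((M : ℝ) + n - 1) := by
  have hcongr : (∫ x in (0:ℝ)..1,
        (x⁻¹ ^ 2 * (1 - (1 - x) ^ M) - x⁻¹ * M * (1 - x) ^ (M - 1)) *
          (n * x * (1 - x) ^ (n - 1)))
      = ∫ x in (0:ℝ)..1,
          ((∑ k ∈ range M, (n : ℝ) * (1 - x) ^ (n - 1 + k))
            - (n : ℝ) * M * (1 - x) ^ (M - 1 + (n - 1))) := by
    apply intervalIntegral.integral_congr_ae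
    filter_upwards with x hx
    have hx0 : x ≠ 0 := by
      rcases Set.mem_uIoc.mp hx with h | h
      · exact ne_of_gt h.1
      · exact absurd (h.1.trans_le h.2) (by norm_num)
    exact pointwise_eq n M x hx0
  rw [hcongr]
  have hint1 : ∀ j : ℕ, IntervalIntegrable (fun x : ℝ => (n : ℝ) * (1 - x) ^ j)
      MeasureTheory.volume 0 1 := fun j => (by fun_prop : Continuous fun x : ℝ =>
        (n : ℝ) * (1 - x) ^ j).intervalIntegrable 0 1
  rw [intervalIntegral.integral_sub
    ((continuous_finset_sum _ fun k _ => by fun_prop).intervalIntegrable 0 1)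
    (((by fun_prop : Continuous fun x : ℝ => (n:ℝ) * M * (1-x) ^ (M - 1 + (n-1)))).intervalIntegrable 0 1),
    intervalIntegral.integral_finset_sum fun k _ => hint1 _]
  congr 1
  · apply Finset.sum_congr rfl
    intro k _
    rw [intervalIntegral.integral_const_mul, int_one_sub_pow]
    have h1 : ((n - 1 + k : ℕ) : ℝ) + 1 = (n : ℝ) + k := by
      have : (n - 1 + k) + 1 = n + k := by omega
      calc ((n - 1 + k : ℕ) : ℝ) + 1 = (((n - 1 + k) + 1 : ℕ) : ℝ) := by push_cast; ring
        _ = ((n + k : ℕ) : ℝ) := by rw [this]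
        _ = (n : ℝ) + k := by push_cast; ring
    rw [h1]
    ring
  · rw [intervalIntegral.integral_const_mul, int_one_sub_pow]
    have h1 : ((M - 1 + (n - 1) : ℕ) : ℝ) + 1 = (M : ℝ) + n - 1 := by
      have h2 : (M - 1 + (n - 1)) + 1 = M + n - 1 := by omega
      calc ((M - 1 + (n - 1) : ℕ) : ℝ) + 1 = (((M - 1 + (n - 1)) + 1 : ℕ) : ℝ) := by push_cast; ring
        _ = ((M + n - 1 : ℕ) : ℝ) := by rw [h2]
        _ = (M : ℝ) + n - 1 := by
            have : 1 ≤ M + n := by omega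
            push_cast [Nat.cast_sub this]
            ring
    rw [h1]
    ring

lemma sum_eq_harmonic (n M : ℕ) (hn : 1 ≤ n) :
    (∑ k ∈ range M, (n : ℝ) / ((n : ℝ) + k))
      = (n : ℝ) * (((harmonic (M + (n - 1)) : ℚ) : ℝ) - ((harmonic (n - 1) : ℚ) : ℝ)) := by
  have key : ((harmonic (M + (n - 1)) : ℚ) : ℝ)
      = ((harmonic (n - 1) : ℚ) : ℝ) + ∑ k ∈ range M, ((n : ℝ) + k)⁻¹ := by
    rw [harmonic_real, harmonic_real, add_comm M (n-1), Finset.sum_range_add]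
    congr 1
    apply Finset.sum_congr rfl
    intro k _
    congr 1
    have h1 : ((n - 1 + k : ℕ) : ℝ) + 1 = (n : ℝ) + k := by
      have : (n - 1 + k) + 1 = n + k := by omega
      calc ((n - 1 + k : ℕ) : ℝ) + 1 = (((n - 1 + k) + 1 : ℕ) : ℝ) := by push_cast; ring
        _ = (n : ℝ) + k := by rw [this]; push_cast; ring
    rw [h1]
  rw [key, add_sub_cancel_left, Finset.mul_sum]
  exact Finset.sum_congr rfl fun k _ => div_eq_mul_inv _ _

/-- For fixed `n ≥ 2`, with
`I(M) = ∫_0^1 [x⁻²(1-(1-x)^M) - x⁻¹ M (1-x)^(M-1)] · n x (1-x)^(n-1) dx`,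
the ratio `I(M)/log M` converges to `n` as `M → ∞`. -/
theorem integral_singleton_density_asymptotic (n : ℕ) (hn : 2 ≤ n) :
    Tendsto
      (fun M : ℕ =>
        (∫ x in (0:ℝ)..1,
            (x⁻¹ ^ 2 * (1 - (1 - x) ^ M) - x⁻¹ * M * (1 - x) ^ (M - 1)) *
              (n * x * (1 - x) ^ (n - 1))) / Real.log M)
      atTop (nhds n) := by
  have hn1 : 1 ≤ n := by omega
  set γ := Real.eulerMascheroniConstant
  set h0 : ℝ := ((harmonic (n - 1) : ℚ) : ℝ)
  -- harmonic (M + (n-1)) - log M → γ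
  have hh1 : Tendsto (fun M : ℕ => ((harmonic (M + (n - 1)) : ℚ) : ℝ) - Real.log M)
      atTop (nhds γ) := by
    have ha : Tendsto (fun M : ℕ => ((harmonic (M + (n - 1)) : ℚ) : ℝ)
        - Real.log ((M + (n - 1) : ℕ) : ℝ)) atTop (nhds γ) :=
      Real.tendsto_harmonic_sub_log.comp (tendsto_add_atTop_nat (n - 1))
    have hb : Tendsto (fun M : ℕ => Real.log ((M + (n - 1) : ℕ) : ℝ) - Real.log M)
        atTop (nhds 0) := by
      have := (Real.tendsto_log_comp_add_sub_log ((n : ℝ) - 1)).comp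
        tendsto_natCast_atTop_atTop
      apply this.congr
      intro M
      simp only [Function.comp_apply]
      congr 2
      push_cast [Nat.cast_sub hn1]
      ring
    have := ha.add hb
    simpa using this
  have hlog : Tendsto (fun M : ℕ => Real.log M) atTop atTop :=
    Real.tendsto_log_atTop.comp tendsto_natCast_atTop_atTop
  -- n*M/(M+n-1) → n
  have hr : Tendsto (fun M : ℕ => (n : ℝ) * M / ((M : ℝ) + n - 1)) atTop (nhds n) := by
    have hden : Tendsto (fun M : ℕ => (M : ℝ) + n - 1) atTop atTop := by
      apply tendsto_atTop_add_const_right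
      exact tendsto_atTop_add_const_right _ _ tendsto_natCast_atTop_atTop
    have h2 : Tendsto (fun M : ℕ => (n : ℝ) * ((n : ℝ) - 1) / ((M : ℝ) + n - 1))
        atTop (nhds 0) := Tendsto.div_atTop tendsto_const_nhds hden
    have h3 : Tendsto (fun M : ℕ => (n : ℝ) - (n : ℝ) * ((n : ℝ) - 1) / ((M : ℝ) + n - 1))
        atTop (nhds ((n : ℝ) - 0)) := tendsto_const_nhds.sub h2
    rw [sub_zero] at h3
    apply h3.congr'
    filter_upwards [eventually_ge_atTop 1] with M hM
    have hMpos : (0 : ℝ) < (M : ℝ) + n - 1 := by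
      have : (1 : ℝ) ≤ (M : ℝ) := by exact_mod_cast hM
      have : (2 : ℝ) ≤ (n : ℝ) := by exact_mod_cast hn
      nlinarith
    field_simp
    ring
  -- main combination
  have hmain : Tendsto (fun M : ℕ =>
      ((n : ℝ) * (((harmonic (M + (n - 1)) : ℚ) : ℝ) - Real.log M) - (n : ℝ) * h0
        - (n : ℝ) * M / ((M : ℝ) + n - 1)) / Real.log M + n)
      atTop (nhds n) := by
    have hnum : Tendsto (fun M : ℕ =>
        (n : ℝ) * (((harmonic (M + (n - 1)) : ℚ) : ℝ) - Real.log M) - (n : ℝ) * h0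
          - (n : ℝ) * M / ((M : ℝ) + n - 1)) atTop
        (nhds ((n : ℝ) * γ - (n : ℝ) * h0 - n)) :=
      ((hh1.const_mul _).sub tendsto_const_nhds).sub hr
    have := (Tendsto.div_atTop hnum hlog).add (tendsto_const_nhds (x := (n : ℝ)))
    simpa using this
  apply hmain.congr'
  filter_upwards [eventually_ge_atTop 2] with M hM
  have hM1 : 1 ≤ M := by omega
  rw [integral_eq n M hn1 hM1, sum_eq_harmonic n M hn1]
  have hlogM : Real.log M ≠ 0 := by
    have : (1 : ℝ) < (M : ℝ) := by exact_mod_cast (by omega : 1 < M)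
    exact ne_of_gt (Real.log_pos this)
  field_simp
  ring
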